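/- Monotonicity of f_n in n: For every real m > 0 and every positive integer n, f_n(m) ≤ f_{n+1}(m). -/

import Mathlib

/-- The function `f_n(m)` of Eq. (13): tight bound relating von Neumann entropy
and log-determinant of Gaussian states, with `coth t = cosh t / sinh t`. -/
noncomputable def f (n : ℕ) (m : ℝ) : ℝ :=
  ((n : ℝ) / 2) * (Real.log ((Real.exp (m / (n : ℝ)) - 1) / 4)
    + Real.exp (m / (2 * (n : ℝ))) *
        Real.log (Real.cosh (m / (4 * (n : ℝ))) / Real.sinh (m / (4 * (n : ℝ)))))


open Real Set Filter Topology

noncomputable def g (t : ℝ) : ℝ :=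
  2 * t + (1 + Real.exp (2 * t)) * Real.log (Real.cosh t)
    - (Real.exp (2 * t) - 1) * Real.log (Real.sinh t)

noncomputable def g1 (t : ℝ) : ℝ :=
  2 + 2 * Real.exp (2 * t) * (Real.log (Real.cosh t) - Real.log (Real.sinh t))
    + (1 + Real.exp (2 * t)) * (Real.sinh t / Real.cosh t)
    - (Real.exp (2 * t) - 1) * (Real.cosh t / Real.sinh t)

noncomputable def g2 (t : ℝ) : ℝ :=
  4 * Real.exp (2 * t) * ((Real.log (Real.cosh t) - Real.log (Real.sinh t))
    - 1 / (2 * Real.sinh t * Real.cosh t))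

lemma hasDerivAt_g {t : ℝ} (ht : 0 < t) : HasDerivAt g (g1 t) t := by
  have hsh : 0 < Real.sinh t := Real.sinh_pos_iff.2 ht
  have hch : 0 < Real.cosh t := Real.cosh_pos t
  have hE : HasDerivAt (fun t : ℝ => Real.exp (2 * t)) (2 * Real.exp (2 * t)) t := by
    simpa [mul_comm, Function.comp_def] using (Real.hasDerivAt_exp (2 * t)).comp t
      ((hasDerivAt_id t).const_mul 2)
  have hP : HasDerivAt (fun t : ℝ => Real.log (Real.cosh t)) (Real.sinh t / Real.cosh t) t := by
    simpa [div_eq_inv_mul, Function.comp_def] using (Real.hasDerivAt_log hch.ne').comp t (Real.hasDerivAt_cosh t)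
  have hQ : HasDerivAt (fun t : ℝ => Real.log (Real.sinh t)) (Real.cosh t / Real.sinh t) t := by
    simpa [div_eq_inv_mul, Function.comp_def] using (Real.hasDerivAt_log hsh.ne').comp t (Real.hasDerivAt_sinh t)
  have h1 : HasDerivAt (fun t : ℝ => (1 + Real.exp (2 * t)) * Real.log (Real.cosh t))
      (2 * Real.exp (2 * t) * Real.log (Real.cosh t)
        + (1 + Real.exp (2 * t)) * (Real.sinh t / Real.cosh t)) t := by
    simpa [Pi.mul_def, Pi.add_def] using ((hasDerivAt_const t (1:ℝ)).add hE).mul hP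
  have h2 : HasDerivAt (fun t : ℝ => (Real.exp (2 * t) - 1) * Real.log (Real.sinh t))
      (2 * Real.exp (2 * t) * Real.log (Real.sinh t)
        + (Real.exp (2 * t) - 1) * (Real.cosh t / Real.sinh t)) t := by
    simpa [Pi.mul_def, Pi.sub_def] using (hE.sub (hasDerivAt_const t (1:ℝ))).mul hQ
  have h0 : HasDerivAt (fun t : ℝ => 2 * t) 2 t := by
    simpa using (hasDerivAt_id t).const_mul 2
  have := (h0.add h1).sub h2
  convert this using 1
  · rfl
  · rfl
  · rfl
  unfold g1; ring


lemma alg (S C e : ℝ) (hS : 0 < S) (hC : 0 < C) (he : e = (C+S)^2) (hp : C^2 - S^2 = 1) :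
    4*e*(-(1/(2*S*C))) = 2*e*(S/C - C/S) + 2*e*(S/C) + (1+e)*((C*C-S*S)/C^2)
      - (2*e*(C/S) + (e-1)*((S*S-C*C)/S^2)) := by
  subst he
  field_simp
  ring_nf
  linear_combination (-2*S^4 + 4*C*S^3 + 12*C^2*S^2 + 4*C^3*S - 2*C^4) * hp


lemma hasDerivAt_g1 {t : ℝ} (ht : 0 < t) : HasDerivAt g1 (g2 t) t := by
  have hsh : 0 < Real.sinh t := Real.sinh_pos_iff.2 ht
  have hch : 0 < Real.cosh t := Real.cosh_pos t
  have hE : HasDerivAt (fun t : ℝ => Real.exp (2 * t)) (2 * Real.exp (2 * t)) t := by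
    simpa [mul_comm, Function.comp_def] using (Real.hasDerivAt_exp (2 * t)).comp t
      ((hasDerivAt_id t).const_mul 2)
  have hP : HasDerivAt (fun t : ℝ => Real.log (Real.cosh t)) (Real.sinh t / Real.cosh t) t := by
    simpa [div_eq_inv_mul, Function.comp_def] using (Real.hasDerivAt_log (Real.cosh_pos t).ne').comp t (Real.hasDerivAt_cosh t)
  have hQ : HasDerivAt (fun t : ℝ => Real.log (Real.sinh t)) (Real.cosh t / Real.sinh t) t := by
    simpa [div_eq_inv_mul, Function.comp_def] using (Real.hasDerivAt_log hsh.ne').comp t (Real.hasDerivAt_sinh t)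
  have hT : HasDerivAt (fun t : ℝ => Real.sinh t / Real.cosh t)
      ((Real.cosh t * Real.cosh t - Real.sinh t * Real.sinh t) / Real.cosh t ^ 2) t :=
    (Real.hasDerivAt_sinh t).div (Real.hasDerivAt_cosh t) hch.ne'
  have hC : HasDerivAt (fun t : ℝ => Real.cosh t / Real.sinh t)
      ((Real.sinh t * Real.sinh t - Real.cosh t * Real.cosh t) / Real.sinh t ^ 2) t :=
    (Real.hasDerivAt_cosh t).div (Real.hasDerivAt_sinh t) hsh.ne'
  have h1 : HasDerivAt (fun t : ℝ => 2 * Real.exp (2 * t) *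
        (Real.log (Real.cosh t) - Real.log (Real.sinh t)))
      (2 * (2 * Real.exp (2 * t)) * (Real.log (Real.cosh t) - Real.log (Real.sinh t))
        + 2 * Real.exp (2 * t) * (Real.sinh t / Real.cosh t - Real.cosh t / Real.sinh t)) t := by
    simpa [mul_assoc, Pi.mul_def, Pi.sub_def] using (hE.const_mul 2).mul (hP.sub hQ)
  have h2 : HasDerivAt (fun t : ℝ => (1 + Real.exp (2 * t)) * (Real.sinh t / Real.cosh t))
      (2 * Real.exp (2 * t) * (Real.sinh t / Real.cosh t)
        + (1 + Real.exp (2 * t)) * ((Real.cosh t * Real.cosh t - Real.sinh t * Real.sinh t) / Real.cosh t ^ 2)) t := by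
    simpa [Pi.mul_def, Pi.add_def] using ((hasDerivAt_const t (1:ℝ)).add hE).mul hT
  have h3 : HasDerivAt (fun t : ℝ => (Real.exp (2 * t) - 1) * (Real.cosh t / Real.sinh t))
      (2 * Real.exp (2 * t) * (Real.cosh t / Real.sinh t)
        + (Real.exp (2 * t) - 1) * ((Real.sinh t * Real.sinh t - Real.cosh t * Real.cosh t) / Real.sinh t ^ 2)) t := by
    simpa [Pi.mul_def, Pi.sub_def] using (hE.sub (hasDerivAt_const t (1:ℝ))).mul hC
  have := ((hasDerivAt_const t (2:ℝ)).add h1).add h2 |>.sub h3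
  convert this using 1
  · rfl
  · rfl
  · rfl
  have hE2 : Real.exp (2 * t) = (Real.cosh t + Real.sinh t) ^ 2 := by
    rw [two_mul, Real.exp_add, ← Real.cosh_add_sinh]; ring
  have hpyth : Real.cosh t ^ 2 - Real.sinh t ^ 2 = 1 := Real.cosh_sq_sub_sinh_sq t
  unfold g2
  linear_combination alg (Real.sinh t) (Real.cosh t) (Real.exp (2*t)) hsh hch hE2 hpyth

lemma g2_nonpos {t : ℝ} (ht : 0 < t) : g2 t ≤ 0 := by
  have hsh : 0 < Real.sinh t := Real.sinh_pos_iff.2 ht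
  have hch : 0 < Real.cosh t := Real.cosh_pos t
  set X : ℝ := Real.cosh t / Real.sinh t with hXdef
  have hX0 : 0 < X := div_pos hch hsh
  have hX1 : 1 < X := by
    rw [lt_div_iff₀ hsh]
    have := Real.cosh_sub_sinh t
    nlinarith [Real.exp_pos (-t)]
  have hlog : 0 < Real.log X := Real.log_pos hX1
  have hsinhlog : Real.sinh (Real.log X) = 1 / (2 * Real.sinh t * Real.cosh t) := by
    rw [Real.sinh_log hX0, hXdef]
    have hp : Real.cosh t ^ 2 - Real.sinh t ^ 2 = 1 := Real.cosh_sq_sub_sinh_sq t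
    field_simp
    linear_combination hp
  have hle : Real.log X ≤ Real.sinh (Real.log X) := (Real.self_lt_sinh_iff.2 hlog).le
  have hPQ : Real.log (Real.cosh t) - Real.log (Real.sinh t) = Real.log X :=
    (Real.log_div hch.ne' hsh.ne').symm
  unfold g2
  rw [hPQ, ← hsinhlog]
  have : Real.log X - Real.sinh (Real.log X) ≤ 0 := by linarith
  have hE : 0 < 4 * Real.exp (2 * t) := by positivity
  exact mul_nonpos_of_nonneg_of_nonpos hE.le this

lemma g_zero : g 0 = 0 := by simp [g]

lemma g_continuousOn : ContinuousOn g (Ici 0) := by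
  intro x hx
  rcases eq_or_lt_of_le (mem_Ici.1 hx) with h | h
  · -- x = 0
    subst h
    rw [show Ici (0:ℝ) = insert 0 (Ioi 0) by
      ext y; simp [le_iff_lt_or_eq, or_comm, eq_comm]]
    rw [continuousWithinAt_insert_self]
    unfold ContinuousWithinAt
    rw [g_zero]
    have hA : Tendsto (fun t : ℝ => 2 * t + (1 + Real.exp (2 * t)) * Real.log (Real.cosh t))
        (𝓝[>] (0:ℝ)) (𝓝 0) := by
      have hlc : Continuous (fun t : ℝ => Real.log (Real.cosh t)) :=
        continuous_iff_continuousAt.2 fun x =>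
          (Real.continuousAt_log (Real.cosh_pos x).ne').comp Real.continuous_cosh.continuousAt
      have hc : Continuous (fun t : ℝ => 2 * t + (1 + Real.exp (2 * t)) * Real.log (Real.cosh t)) := by
        apply Continuous.add (by continuity)
        exact Continuous.mul (by continuity) hlc
      have := hc.tendsto 0
      simp at this
      exact this.mono_left nhdsWithin_le_nhds
    have hslopeE : Tendsto (fun t : ℝ => (Real.exp (2 * t) - 1) / t) (𝓝[>] (0:ℝ)) (𝓝 2) := by
      have hD : HasDerivAt (fun t : ℝ => Real.exp (2 * t)) (2 * Real.exp (2 * 0)) 0 := by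
        simpa [mul_comm, Function.comp_def] using (Real.hasDerivAt_exp (2 * 0)).comp 0
          ((hasDerivAt_id (0:ℝ)).const_mul 2)
      rw [hasDerivAt_iff_tendsto_slope] at hD
      have := hD.mono_left (nhdsWithin_mono _ (by intro y hy; simpa using (ne_of_gt hy)))
      simp only [slope_fun_def_field, Real.exp_zero, mul_zero, sub_zero] at this ⊢
      rw [mul_one] at this; exact this
    have hslopeS : Tendsto (fun t : ℝ => Real.sinh t / t) (𝓝[>] (0:ℝ)) (𝓝 1) := by
      have hD : HasDerivAt Real.sinh (Real.cosh 0) 0 := Real.hasDerivAt_sinh 0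
      rw [hasDerivAt_iff_tendsto_slope] at hD
      have := hD.mono_left (nhdsWithin_mono _ (by intro y hy; simpa using (ne_of_gt hy)))
      simp only [slope_fun_def_field, Real.sinh_zero, Real.cosh_zero, sub_zero] at this ⊢
      exact this
    have hlog1 : Tendsto (fun t : ℝ => Real.log (Real.sinh t / t)) (𝓝[>] (0:ℝ)) (𝓝 0) := by
      have := (Real.continuousAt_log one_ne_zero).tendsto.comp hslopeS
      simpa [Function.comp_def] using this
    have htlogt : Tendsto (fun t : ℝ => t * Real.log t) (𝓝[>] (0:ℝ)) (𝓝 0) := by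
      have := tendsto_log_mul_rpow_nhdsGT_zero one_pos
      simp only [Real.rpow_one] at this
      exact this.congr fun x => mul_comm _ _
    have hE0 : Tendsto (fun t : ℝ => Real.exp (2 * t) - 1) (𝓝[>] (0:ℝ)) (𝓝 0) := by
      have hc : Continuous fun t : ℝ => Real.exp (2 * t) - 1 := by continuity
      have := hc.tendsto 0
      simp at this
      exact this.mono_left nhdsWithin_le_nhds
    have hB : Tendsto (fun t : ℝ => (Real.exp (2 * t) - 1) * Real.log (Real.sinh t))
        (𝓝[>] (0:ℝ)) (𝓝 0) := by
      have h1 : Tendsto (fun t : ℝ => (Real.exp (2 * t) - 1) * Real.log (Real.sinh t / t)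
          + ((Real.exp (2 * t) - 1) / t) * (t * Real.log t)) (𝓝[>] (0:ℝ)) (𝓝 0) := by
        have := (hE0.mul hlog1).add (hslopeE.mul htlogt)
        simpa using this
      refine h1.congr' ?_
      filter_upwards [self_mem_nhdsWithin] with t ht
      have ht : (0:ℝ) < t := ht
      have hsh : 0 < Real.sinh t := Real.sinh_pos_iff.2 ht
      have : Real.log (Real.sinh t) = Real.log (Real.sinh t / t) + Real.log t := by
        rw [← Real.log_mul (by positivity) ht.ne']
        congr 1
        field_simp
      rw [this]
      field_simp
    have := hA.sub hB
    simp only [sub_zero] at this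
    exact this.congr fun t => rfl
  · -- x > 0
    have hsh : Real.sinh x ≠ 0 := (Real.sinh_pos_iff.2 h).ne'
    have hch : Real.cosh x ≠ 0 := (Real.cosh_pos x).ne'
    apply ContinuousAt.continuousWithinAt
    unfold g
    have h1 : ContinuousAt (fun t => Real.log (Real.cosh t)) x :=
      (Real.continuousAt_log hch).comp Real.continuous_cosh.continuousAt
    have h2 : ContinuousAt (fun t => Real.log (Real.sinh t)) x :=
      (Real.continuousAt_log hsh).comp Real.continuous_sinh.continuousAt
    have h3 : ContinuousAt (fun t : ℝ => Real.exp (2 * t)) x :=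
      (Real.continuous_exp.comp (continuous_const.mul continuous_id)).continuousAt
    exact (((continuous_const.mul continuous_id).continuousAt).add
      (((continuousAt_const.add h3)).mul h1)).sub ((h3.sub continuousAt_const).mul h2)

lemma g_concave : ConcaveOn ℝ (Ici 0) g := by
  apply concaveOn_of_hasDerivWithinAt2_nonpos (convex_Ici 0) g_continuousOn
    (f' := g1) (f'' := g2)
  · intro x hx
    rw [interior_Ici] at hx
    exact (hasDerivAt_g hx).hasDerivWithinAt
  · intro x hx
    rw [interior_Ici] at hx
    exact (hasDerivAt_g1 hx).hasDerivWithinAt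
  · intro x hx
    rw [interior_Ici] at hx
    exact g2_nonpos hx

lemma g_slope {a b : ℝ} (ha : 0 < a) (hab : a ≤ b) : a * g b ≤ b * g a := by
  have hb : 0 < b := lt_of_lt_of_le ha hab
  have h1 : (0:ℝ) ≤ a / b := by positivity
  have h2 : (0:ℝ) ≤ 1 - a / b := by
    have : a / b ≤ 1 := (div_le_one hb).2 hab
    linarith
  have h3 : a / b + (1 - a / b) = 1 := by ring
  have hkey := g_concave.2 (mem_Ici.2 hb.le) (mem_Ici.2 (le_refl (0:ℝ))) h1 h2 h3
  rw [g_zero] at hkey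
  simp only [smul_eq_mul, mul_zero, add_zero] at hkey
  rw [show a / b * b = a by field_simp] at hkey
  -- hkey : a / b * g b ≤ g a
  have := mul_le_mul_of_nonneg_left hkey hb.le
  calc a * g b = b * (a / b * g b) := by field_simp
    _ ≤ b * g a := this

lemma f_eq (n : ℕ) (hn : 0 < n) (m : ℝ) (hm : 0 < m) :
    f n m = ((n : ℝ) / 2) * g (m / (4 * (n : ℝ))) := by
  have hn' : (0:ℝ) < (n:ℝ) := by exact_mod_cast hn
  set t : ℝ := m / (4 * (n : ℝ)) with htdef
  have ht : 0 < t := by positivity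
  have hsh : 0 < Real.sinh t := Real.sinh_pos_iff.2 ht
  have hch : 0 < Real.cosh t := Real.cosh_pos t
  have h1 : m / (n : ℝ) = 4 * t := by rw [htdef]; field_simp
  have h2 : m / (2 * (n : ℝ)) = 2 * t := by rw [htdef]; field_simp; ring
  have h3 : (Real.exp (4 * t) - 1) / 4 = Real.exp (2 * t) * (Real.sinh t * Real.cosh t) := by
    have hE : Real.exp (2 * t) * Real.exp (-(2 * t)) = 1 := by
      rw [← Real.exp_add]; simp
    have e4 : Real.exp (4 * t) = Real.exp (2 * t) * Real.exp (2 * t) := by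
      rw [← Real.exp_add]; ring_nf
    calc (Real.exp (4 * t) - 1) / 4
        = Real.exp (2 * t) * ((Real.exp (2 * t) - Real.exp (-(2 * t))) / 4) := by
          rw [e4]; linear_combination ((1:ℝ)/4) * hE
      _ = Real.exp (2 * t) * (Real.sinh (2 * t) / 2) := by
          rw [Real.sinh_eq]; ring
      _ = Real.exp (2 * t) * (Real.sinh t * Real.cosh t) := by
          rw [Real.sinh_two_mul]; ring
  have h4 : Real.log ((Real.exp (4 * t) - 1) / 4)
      = 2 * t + (Real.log (Real.sinh t) + Real.log (Real.cosh t)) := by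
    rw [h3, Real.log_mul (Real.exp_ne_zero _) (by positivity), Real.log_exp,
      Real.log_mul hsh.ne' hch.ne']
  have h5 : Real.log (Real.cosh t / Real.sinh t)
      = Real.log (Real.cosh t) - Real.log (Real.sinh t) := Real.log_div hch.ne' hsh.ne'
  unfold f
  rw [h1, h2, h4, h5, g]
  ring


/-- **Monotonicity of `f_n` in `n`**: for every real `m > 0` and every positive
integer `n`, `f n m ≤ f (n+1) m`. -/
theorem f_mono_in_n (n : ℕ) (hn : 0 < n) (m : ℝ) (hm : 0 < m) :
    f n m ≤ f (n + 1) m := by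
  have hn' : (0:ℝ) < (n:ℝ) := by exact_mod_cast hn
  set a : ℝ := m / (4 * ((n : ℝ) + 1)) with hadef
  set b : ℝ := m / (4 * (n : ℝ)) with hbdef
  have ha : 0 < a := by positivity
  have hb : 0 < b := by positivity
  have hab : a ≤ b := by
    rw [hadef, hbdef]
    apply div_le_div_of_nonneg_left hm.le (by positivity)
    linarith
  have key := g_slope ha hab
  rw [f_eq n hn m hm, f_eq (n + 1) (Nat.succ_pos n) m hm]
  push_cast
  have hc : (0:ℝ) ≤ 2 * (n : ℝ) * ((n : ℝ) + 1) / m := by positivity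
  have h := mul_le_mul_of_nonneg_left key hc
  calc (n : ℝ) / 2 * g (m / (4 * (n : ℝ)))
      = 2 * (n : ℝ) * ((n : ℝ) + 1) / m * (a * g b) := by
        rw [hadef, hbdef]; field_simp; ring
    _ ≤ 2 * (n : ℝ) * ((n : ℝ) + 1) / m * (b * g a) := h
    _ = ((n : ℝ) + 1) / 2 * g (m / (4 * ((n : ℝ) + 1))) := by
        rw [hadef, hbdef]; field_simp; ring
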